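/- The polynomial C = t² + 1 + ε𝐢 ∈ 𝔻ℍ[t] satisfies, for all real numbers a, b, the identity C = (t + 𝐢 + ε(a𝐣 + b𝐤 − 1/2))·(t − 𝐢 − ε(a𝐣 + b𝐤 − 1/2)); however, there are no h₁, h₂ ∈ 𝔻ℍ with C = (t − h₁)(t − h₂) such that both linear factors are motion polynomials, i.e. such that ν(t − h₁) and ν(t − h₂) both have all coefficients in ℝ·1. -/

import Mathlib

open Polynomial DualNumber

/-- The dual quaternions `ℍ ⊕ εℍ` with `ε` central and `ε² = 0`. -/
abbrev DH : Type := DualNumber (Quaternion ℝ)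

/-- Quaternion unit `𝐢`. -/
def qi : Quaternion ℝ := ⟨0, 1, 0, 0⟩
/-- Quaternion unit `𝐣`. -/
def qj : Quaternion ℝ := ⟨0, 0, 1, 0⟩
/-- Quaternion unit `𝐤`. -/
def qk : Quaternion ℝ := ⟨0, 0, 0, 1⟩

/-- The dual quaternion with primal part `a` and dual part `b`, i.e. `a + εb`. -/
def dq (a b : Quaternion ℝ) : DH := (a, b)

/-- Conjugation of a dual quaternion: quaternion conjugation in both components. -/
def dconj (x : DH) : DH := (star x.fst, star x.snd)

/-- Coefficientwise conjugation of a left polynomial over the dual quaternions. -/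
noncomputable def dpconj (p : Polynomial DH) : Polynomial DH :=
  ⟨AddMonoidAlgebra.ofCoeff (Finsupp.mapRange dconj (by simp [dconj] <;> rfl) p.toFinsupp.coeff)⟩

lemma qi_re : qi.re = 0 := rfl
lemma qi_imI : qi.imI = 1 := rfl
lemma qi_imJ : qi.imJ = 0 := rfl
lemma qi_imK : qi.imK = 0 := rfl
lemma qj_re : qj.re = 0 := rfl
lemma qj_imI : qj.imI = 0 := rfl
lemma qj_imJ : qj.imJ = 1 := rfl
lemma qj_imK : qj.imK = 0 := rfl
lemma qk_re : qk.re = 0 := rfl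
lemma qk_imI : qk.imI = 0 := rfl
lemma qk_imJ : qk.imJ = 0 := rfl
lemma qk_imK : qk.imK = 1 := rfl
lemma dq_fst (a b : Quaternion ℝ) : (dq a b).fst = a := rfl
lemma dq_snd (a b : Quaternion ℝ) : (dq a b).snd = b := rfl
lemma dconj_fst (x : DH) : (dconj x).fst = star x.fst := rfl
lemma dconj_snd (x : DH) : (dconj x).snd = star x.snd := rfl

lemma expandLin (u v : DH) :
    (X - Polynomial.C u) * (X - Polynomial.C v)
      = X^2 - Polynomial.C (u+v) * X + Polynomial.C (u*v) := by
  simp only [sub_mul, mul_sub, X_mul, ← C_mul, C_add, add_mul, sq]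
  abel

lemma dq_mul (a b c d : Quaternion ℝ) : dq a b * dq c d = dq (a*c) (a*d + b*c) := by
  refine TrivSqZeroExt.ext ?_ ?_ <;> simp [dq_fst, dq_snd]

lemma dq_add (a b c d : Quaternion ℝ) : dq a b + dq c d = dq (a+c) (b+d) := rfl

lemma dpconj_coeff (p : Polynomial DH) (n : ℕ) : (dpconj p).coeff n = dconj (p.coeff n) := by
  rcases p with ⟨p⟩
  simp [dpconj, coeff]

lemma dconj_one : dconj 1 = 1 := by
  refine TrivSqZeroExt.ext ?_ ?_ <;> simp [dconj]
lemma dconj_zero : dconj 0 = 0 := by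
  refine TrivSqZeroExt.ext ?_ ?_ <;> simp [dconj]
lemma dconj_sub (x y : DH) : dconj (x - y) = dconj x - dconj y := by
  refine TrivSqZeroExt.ext ?_ ?_ <;> simp [dconj] <;> rfl
lemma dconj_neg (x : DH) : dconj (-x) = -dconj x := by
  refine TrivSqZeroExt.ext ?_ ?_ <;> simp [dconj] <;> rfl

lemma dpconj_lin (h : DH) : dpconj (X - Polynomial.C h) = X - Polynomial.C (dconj h) := by
  refine Polynomial.ext fun n => ?_
  rw [dpconj_coeff]
  rcases n with _|_|n <;>
    simp [coeff_X, dconj_sub, dconj_neg, dconj_one, dconj_zero, Polynomial.coeff_sub]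

lemma half_eq : (1/2 : Quaternion ℝ) = ((1/2 : ℝ) : Quaternion ℝ) := by
  have h2 : ((2:ℝ) : Quaternion ℝ) = (2 : Quaternion ℝ) := by exact_mod_cast rfl
  rw [one_div, one_div, ← h2, ← Quaternion.coe_inv]

lemma snd_id' (a b c : ℝ) :
    (-qi) * (a • qj + b • qk - ((c:ℝ) : Quaternion ℝ))
      + (-(a • qj + b • qk - ((c:ℝ) : Quaternion ℝ))) * qi = (2*c) • qi := by
  ext <;> simp [qi_re, qi_imI, qi_imJ, qi_imK, qj_re, qj_imI, qj_imJ, qj_imK, qk_re, qk_imI, qk_imJ, qk_imK] <;> ring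

lemma snd_id (a b : ℝ) :
    (-qi) * (a • qj + b • qk - (1/2 : Quaternion ℝ))
      + (-(a • qj + b • qk - (1/2 : Quaternion ℝ))) * qi = qi := by
  rw [half_eq, snd_id']
  norm_num

lemma qi_mul_qi : (-qi) * qi = 1 := by
  ext <;> simp [qi_re, qi_imI, qi_imJ, qi_imK, qj_re, qj_imI, qj_imJ, qj_imK, qk_re, qk_imI, qk_imJ, qk_imK] <;> rfl

lemma re_eq_zero (p : Quaternion ℝ) (h : p * p = -1) : p.re = 0 := by
  have h1 := congrArg QuaternionAlgebra.re h
  have h2 := congrArg QuaternionAlgebra.imI h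
  have h3 := congrArg QuaternionAlgebra.imJ h
  have h4 := congrArg QuaternionAlgebra.imK h
  simp only [Quaternion.re_mul, Quaternion.imI_mul, Quaternion.imJ_mul, Quaternion.imK_mul,
    Quaternion.re_neg, Quaternion.imI_neg, Quaternion.imJ_neg, Quaternion.imK_neg,
    Quaternion.re_one, Quaternion.imI_one, Quaternion.imJ_one, Quaternion.imK_one] at h1 h2 h3 h4
  have key : p.re * (p.re ^ 2 + 1) = 0 := by
    linear_combination p.re*h1 + (p.imI/2)*h2 + (p.imJ/2)*h3 + (p.imK/2)*h4
  have pos : p.re ^ 2 + 1 > 0 := by positivity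
  rcases mul_eq_zero.mp key with h | h
  · exact h
  · linarith

set_option maxHeartbeats 1000000 in
set_option synthInstance.maxHeartbeats 400000 in
/-- The polynomial `F = t² + 1 + ε𝐢` satisfies, for all real `a`, `b`,
`F = (t + 𝐢 + ε(a𝐣 + b𝐤 - 1/2)) · (t - 𝐢 - ε(a𝐣 + b𝐤 - 1/2))`, but it has no
factorization into two linear factors that are both motion polynomials. -/
theorem factorizations_but_no_motion_factorization :
    (∀ a b : ℝ,
      (X ^ 2 + 1 + Polynomial.C (dq 0 qi) : Polynomial DH) =
        (X - Polynomial.C (dq (-qi) (-(a • qj + b • qk - (1 / 2 : Quaternion ℝ))))) *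
          (X - Polynomial.C (dq qi (a • qj + b • qk - (1 / 2 : Quaternion ℝ))))) ∧
    ¬ ∃ h₁ h₂ : DH,
      (X ^ 2 + 1 + Polynomial.C (dq 0 qi) : Polynomial DH) =
          (X - Polynomial.C h₁) * (X - Polynomial.C h₂) ∧
        (∀ j : ℕ, ∃ r : ℝ,
          ((X - Polynomial.C h₁) * dpconj (X - Polynomial.C h₁)).coeff j
            = algebraMap ℝ DH r) ∧
        (∀ j : ℕ, ∃ r : ℝ,
          ((X - Polynomial.C h₂) * dpconj (X - Polynomial.C h₂)).coeff j
            = algebraMap ℝ DH r) := by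
  constructor
  · intro a b
    rw [expandLin, dq_add, dq_mul, qi_mul_qi, snd_id]
    have hz : dq (-qi + qi) (-(a • qj + b • qk - (1/2 : Quaternion ℝ))
        + (a • qj + b • qk - (1/2 : Quaternion ℝ))) = 0 := by
      refine TrivSqZeroExt.ext ?_ ?_ <;> simp [dq]
    have h1 : dq 1 qi = 1 + dq 0 qi := by
      refine TrivSqZeroExt.ext ?_ ?_ <;> simp [dq_fst, dq_snd]
    rw [hz, h1, map_add, map_one, map_zero, zero_mul, sub_zero]
    abel
  · rintro ⟨h₁, h₂, heq, m₁, m₂⟩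
    rw [expandLin] at heq
    have e1 : h₁ + h₂ = 0 := by
      have h := congrArg (fun P => Polynomial.coeff P 1) heq
      simp only [coeff_add, coeff_sub, coeff_X_pow, coeff_one, coeff_C, coeff_C_mul,
        coeff_X_one, mul_one] at h
      norm_num at h
      exact neg_eq_zero.mp (by rw [neg_add_rev]; exact h.symm)
    have e0 : h₁ * h₂ = 1 + dq 0 qi := by
      have h := congrArg (fun P => Polynomial.coeff P 0) heq
      simp only [coeff_add, coeff_sub, coeff_X_pow, coeff_one, coeff_C, coeff_C_mul,
        coeff_X_zero, mul_zero] at h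
      norm_num at h
      exact h.symm
    have hh2 : h₂ = -h₁ := eq_neg_of_add_eq_zero_left (by rw [add_comm]; exact e1)
    have hsq : h₁ * h₁ = -(1 + dq 0 qi) := by
      rw [hh2, mul_neg] at e0
      rw [← neg_eq_iff_eq_neg.mpr e0.symm]
    set p := h₁.fst with hp
    set q := h₁.snd with hqdef
    have hfst : p * p = -1 := by
      have := congrArg TrivSqZeroExt.fst hsq
      simpa [dq_fst, dq_snd] using this
    have hsnd : p * q + q * p = -qi := by
      have := congrArg TrivSqZeroExt.snd hsq
      simpa [dq_fst, dq_snd] using this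
    obtain ⟨r1, hr1⟩ := m₁ 1
    obtain ⟨r0, hr0⟩ := m₁ 0
    rw [dpconj_lin, expandLin] at hr1 hr0
    have hq1 : q + star q = 0 := by
      have h := hr1
      simp only [coeff_add, coeff_sub, coeff_X_pow, coeff_one, coeff_C, coeff_C_mul,
        coeff_X_one, mul_one] at h
      norm_num at h
      have := congrArg TrivSqZeroExt.snd h
      rw [TrivSqZeroExt.algebraMap_eq_inl'] at this
      simp [dconj_fst, dconj_snd] at this
      rw [← neg_add, neg_eq_zero, add_comm] at this
      exact this
    have hq0 : p * star q + q * star p = 0 := by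
      have h := hr0
      simp only [coeff_add, coeff_sub, coeff_X_pow, coeff_one, coeff_C, coeff_C_mul,
        coeff_X_zero, mul_zero] at h
      norm_num at h
      have := congrArg TrivSqZeroExt.snd h
      rw [TrivSqZeroExt.algebraMap_eq_inl'] at this
      simpa [dconj_fst, dconj_snd] using this
    have hre : p.re = 0 := re_eq_zero p hfst
    have hsp : star p = -p := by
      ext <;> simp [hre]
    have hsq' : star q = -q := (neg_eq_of_add_eq_zero_right hq1).symm
    rw [hsq', hsp, mul_neg, mul_neg, ← neg_add, neg_eq_zero] at hq0
    rw [hq0] at hsnd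
    have := congrArg QuaternionAlgebra.imI hsnd
    simp [qi_imI, Quaternion.imI_zero] at this
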